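/- Let F = ⟨Tree, ⊴, Choice, R, R_e⟩ be a jstit frame for Ag and let CS be a constant specification. Then every model M ∈ Mod_CS({F}) validates every formula A with ⊢_CS A if and only if F is regular. -/

import Mathlib

/-! Preliminaries: temporal frames, stit frames, jstit frames, the language of
JA-STIT, jstit models, satisfaction, and the Hilbert system Σ_D(CS). -/

/-- A temporal frame: a nonempty set of moments with a partial order satisfying
historical connection and no backward branching. -/
structure TemporalFrame (Mo : Type) : Type where
  le : Mo → Mo → Prop
  le_refl : ∀ m, le m m
  le_antisymm : ∀ {m m'}, le m m' → le m' m → m = m'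
  le_trans : ∀ {m1 m2 m3}, le m1 m2 → le m2 m3 → le m1 m3
  nonempty : Nonempty Mo
  hist_conn : ∀ m m1, ∃ m2, le m2 m ∧ le m2 m1
  no_backward : ∀ m m1 m2, le m1 m → le m2 m → le m1 m2 ∨ le m2 m1

namespace TemporalFrame

variable {Mo : Type} (T : TemporalFrame Mo)

/-- The strict companion of the temporal order. -/
def lt (m m' : Mo) : Prop := T.le m m' ∧ m ≠ m'

/-- A history is a maximal chain of moments w.r.t. the temporal order. -/
def IsHistory (h : Set Mo) : Prop :=
  IsChain T.le h ∧ ∀ h' : Set Mo, IsChain T.le h' → h ⊆ h' → h' = h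

/-- `T.H m` is the set of histories passing through the moment `m`. -/
def H (m : Mo) : Set (Set Mo) := { h | T.IsHistory h ∧ m ∈ h }

/-- Histories `h` and `g` are undivided at `m`. -/
def Undiv (m : Mo) (h g : Set Mo) : Prop := ∃ m', T.lt m m' ∧ m' ∈ h ∧ m' ∈ g

/-- `m'` is an immediate successor of `m`. -/
def Next (m m' : Mo) : Prop := T.lt m m' ∧ ∀ m'', T.lt m'' m' → T.le m'' m

/-- Mixed successor condition on (the temporal part of) a frame. -/
def MixSucc : Prop :=
  ∀ m m1 : Mo,
    (T.lt m m1 → ∃ m2, T.le m2 m1 ∧ T.Next m m2) ∨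
    (∀ h ∈ T.H m, ∀ g ∈ T.H m, T.Undiv m h g)

end TemporalFrame

/-- A stit frame for an agent community `Ag`: a temporal frame together with a choice
function assigning to each moment and agent a partition of the histories through that
moment, subject to no choice between undivided histories and independence of agents. -/
structure StitFrame (Mo : Type) (Ag : Type) extends TemporalFrame Mo where
  choice : Mo → Ag → Set (Set (Set Mo))
  choice_cell_nonempty : ∀ m j C, C ∈ choice m j → C.Nonempty
  choice_cell_sub : ∀ m j C, C ∈ choice m j → C ⊆ toTemporalFrame.H m
  choice_cover : ∀ m j h, h ∈ toTemporalFrame.H m → ∃ C ∈ choice m j, h ∈ C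
  choice_disjoint : ∀ m j C C', C ∈ choice m j → C' ∈ choice m j →
    (C ∩ C').Nonempty → C = C'
  no_choice_undiv : ∀ m j h h', h ∈ toTemporalFrame.H m → h' ∈ toTemporalFrame.H m →
    toTemporalFrame.Undiv m h h' → ∀ C ∈ choice m j, h ∈ C → h' ∈ C
  independence : ∀ m (f : Ag → Set (Set Mo)), (∀ j, f j ∈ choice m j) →
    (⋂ j, f j).Nonempty

/-- A justification stit (jstit) frame for `Ag`: a stit frame together with two
epistemic preorders `R ⊆ R_e`, with the temporal order included in `R`. -/
structure JstitFrame (Mo : Type) (Ag : Type) extends StitFrame Mo Ag where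
  R : Mo → Mo → Prop
  Re : Mo → Mo → Prop
  R_refl : ∀ m, R m m
  R_trans : ∀ {m1 m2 m3}, R m1 m2 → R m2 m3 → R m1 m3
  Re_refl : ∀ m, Re m m
  Re_trans : ∀ {m1 m2 m3}, Re m1 m2 → Re m2 m3 → Re m1 m3
  R_sub_Re : ∀ {m m'}, R m m' → Re m m'
  le_sub_R : ∀ {m m'}, le m m' → R m m'

namespace JstitFrame

variable {Mo : Type} {Ag : Type} (F : JstitFrame Mo Ag)

/-- The family `Θ_m` of subsets of the set of moments associated with a moment `m`. -/
def Theta (m : Mo) : Set (Set Mo) :=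
  { S | m ∈ S ∧
    (∀ m1 m2, m1 ∈ S → F.Re m1 m2 → m2 ∈ S) ∧
    (∀ m1, (∀ h ∈ F.toTemporalFrame.H m1,
        ∃ m2 ∈ h, F.toTemporalFrame.Next m1 m2 ∧ m2 ∈ S) → m1 ∈ S) ∧
    (∀ m1, m1 ∈ S →
      (∀ m2, F.toTemporalFrame.lt m2 m1 →
        ∃ m3, F.toTemporalFrame.lt m2 m3 ∧ F.toTemporalFrame.lt m3 m1) →
      ∃ m4, F.toTemporalFrame.lt m4 m1 ∧ m4 ∈ S) }

/-- A jstit frame is unirelational iff `R_e ⊆ R`. -/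
def Unirelational : Prop := ∀ m m', F.Re m m' → F.R m m'

/-- Regularity of a jstit frame. -/
def Regular : Prop :=
  ∀ m m1 : Mo, F.toTemporalFrame.lt m m1 →
    (∃ S : Set Mo,
      (∀ m0, F.toTemporalFrame.lt m m0 → F.le m0 m1 → S ∈ F.Theta m0) ∧
      m ∉ S ∧
      ∃ h' ∈ F.toTemporalFrame.H m,
        (∀ g ∈ F.toTemporalFrame.H m1, ¬ F.toTemporalFrame.Undiv m h' g) ∧
        (∀ m' ∈ h', F.toTemporalFrame.Next m m' → m' ∉ S)) →
    ∃ m2, F.le m2 m1 ∧ F.toTemporalFrame.Next m m2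

end JstitFrame

/-- Proof polynomials over proof variables `PVar` and proof constants `PConst`. -/
inductive Pol (PVar PConst : Type) : Type
  | var : PVar → Pol PVar PConst
  | const : PConst → Pol PVar PConst
  | plus : Pol PVar PConst → Pol PVar PConst → Pol PVar PConst
  | times : Pol PVar PConst → Pol PVar PConst → Pol PVar PConst
  | bang : Pol PVar PConst → Pol PVar PConst

/-- Formulas of JA-STIT. -/
inductive Form (Ag PVar PConst PropVar : Type) : Type
  | pv : PropVar → Form Ag PVar PConst PropVar
  | and : Form Ag PVar PConst PropVar → Form Ag PVar PConst PropVar →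
      Form Ag PVar PConst PropVar
  | neg : Form Ag PVar PConst PropVar → Form Ag PVar PConst PropVar
  | stit : Ag → Form Ag PVar PConst PropVar → Form Ag PVar PConst PropVar
  | box : Form Ag PVar PConst PropVar → Form Ag PVar PConst PropVar
  | proves : Pol PVar PConst → Form Ag PVar PConst PropVar → Form Ag PVar PConst PropVar
  | know : Form Ag PVar PConst PropVar → Form Ag PVar PConst PropVar
  | ann : Pol PVar PConst → Form Ag PVar PConst PropVar

namespace Form

variable {Ag PVar PConst PropVar : Type}

/-- Implication, defined as usual from `¬` and `∧`. -/
def imp (A B : Form Ag PVar PConst PropVar) : Form Ag PVar PConst PropVar :=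
  neg (and A (neg B))

/-- Disjunction, defined as usual. -/
def or (A B : Form Ag PVar PConst PropVar) : Form Ag PVar PConst PropVar :=
  neg (and (neg A) (neg B))

/-- The dual `◇` of the historical necessity modality. -/
def dia (A : Form Ag PVar PConst PropVar) : Form Ag PVar PConst PropVar :=
  neg (box (neg A))

/-- Falsum, defined as usual. -/
def bot [Inhabited PropVar] : Form Ag PVar PConst PropVar :=
  and (pv default) (neg (pv default))

end Form

/-- Conjunction of a nonempty list of formulas (head plus tail). -/
def andList {Ag PVar PConst PropVar : Type} :
    Form Ag PVar PConst PropVar → List (Form Ag PVar PConst PropVar) →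
      Form Ag PVar PConst PropVar
  | A, [] => A
  | A, B :: L => Form.and A (andList B L)

/-- Disjunction of a list of formulas. -/
def bigOr {Ag PVar PConst PropVar : Type} [Inhabited PropVar] :
    List (Form Ag PVar PConst PropVar) → Form Ag PVar PConst PropVar
  | [] => Form.bot
  | [A] => A
  | A :: B :: L => Form.or A (bigOr (B :: L))

/-- A classical propositional tautology: a formula true under every Boolean valuation
commuting with `∧` and `¬` (all other formulas being treated as atoms). -/
def Tautology {Ag PVar PConst PropVar : Type} (A : Form Ag PVar PConst PropVar) : Prop :=
  ∀ v : Form Ag PVar PConst PropVar → Bool,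
    (∀ B C, v (Form.and B C) = (v B && v C)) →
    (∀ B, v (Form.neg B) = !v B) →
    v A = true

/-- The axiom schemes (A0)–(A9) of Σ_D. -/
inductive Ax {Ag PVar PConst PropVar : Type} : Form Ag PVar PConst PropVar → Prop
  -- (A0) classical propositional tautologies
  | a0 {A} : Tautology A → Ax A
  -- (A1) S5 axioms for □
  | boxK {A B} : Ax (Form.imp (Form.box (Form.imp A B))
      (Form.imp (Form.box A) (Form.box B)))
  | boxT {A} : Ax (Form.imp (Form.box A) A)
  | box4 {A} : Ax (Form.imp (Form.box A) (Form.box (Form.box A)))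
  | box5 {A} : Ax (Form.imp (Form.neg (Form.box A)) (Form.box (Form.neg (Form.box A))))
  -- (A1) S5 axioms for each [j]
  | stitK {j : Ag} {A B} : Ax (Form.imp (Form.stit j (Form.imp A B))
      (Form.imp (Form.stit j A) (Form.stit j B)))
  | stitT {j : Ag} {A} : Ax (Form.imp (Form.stit j A) A)
  | stit4 {j : Ag} {A} : Ax (Form.imp (Form.stit j A) (Form.stit j (Form.stit j A)))
  | stit5 {j : Ag} {A} : Ax (Form.imp (Form.neg (Form.stit j A))
      (Form.stit j (Form.neg (Form.stit j A))))
  -- (A2)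
  | a2 {j : Ag} {A} : Ax (Form.imp (Form.box A) (Form.stit j A))
  -- (A3), for pairwise distinct agents
  | a3 {p : Ag × Form Ag PVar PConst PropVar} {L : List (Ag × Form Ag PVar PConst PropVar)} :
      (((p :: L).map Prod.fst).Nodup) →
      Ax (Form.imp
        (andList (Form.dia (Form.stit p.1 p.2)) (L.map fun q => Form.dia (Form.stit q.1 q.2)))
        (Form.dia (andList (Form.stit p.1 p.2) (L.map fun q => Form.stit q.1 q.2))))
  -- (A4)
  | a4 {s t : Pol PVar PConst} {A B} : Ax (Form.imp (Form.proves s (Form.imp A B))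
      (Form.imp (Form.proves t A) (Form.proves (Pol.times s t) B)))
  -- (A5)
  | a5 {t : Pol PVar PConst} {A} : Ax (Form.imp (Form.proves t A)
      (Form.and (Form.proves (Pol.bang t) (Form.proves t A)) (Form.know A)))
  -- (A6)
  | a6 {s t : Pol PVar PConst} {A} : Ax (Form.imp
      (Form.or (Form.proves s A) (Form.proves t A)) (Form.proves (Pol.plus s t) A))
  -- (A7) S4 axioms for K
  | knowK {A B} : Ax (Form.imp (Form.know (Form.imp A B))
      (Form.imp (Form.know A) (Form.know B)))
  | knowT {A} : Ax (Form.imp (Form.know A) A)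
  | know4 {A} : Ax (Form.imp (Form.know A) (Form.know (Form.know A)))
  -- (A8)
  | a8 {A} : Ax (Form.imp (Form.know A) (Form.box (Form.know (Form.box A))))
  -- (A9)
  | a9 {t : Pol PVar PConst} : Ax (Form.imp (Form.box (Form.ann t))
      (Form.know (Form.box (Form.ann t))))

/-- Iterated prefixes `c_n : … : c_1 : A` of instances `A` of the axiom schemes. -/
inductive ConstIter {Ag PVar PConst PropVar : Type} : Form Ag PVar PConst PropVar → Prop
  | base {c : PConst} {A} : Ax A → ConstIter (Form.proves (Pol.const c) A)
  | step {c : PConst} {B} : ConstIter B → ConstIter (Form.proves (Pol.const c) B)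

/-- A constant specification: a set of formulas of the form `c_n : … : c_1 : A` with `A`
an instance of (A0)–(A9), closed under deleting the outermost constant. -/
def IsConstSpec {Ag PVar PConst PropVar : Type}
    (CS : Set (Form Ag PVar PConst PropVar)) : Prop :=
  (∀ B ∈ CS, ConstIter B) ∧
  ∀ (c c' : PConst) (B : Form Ag PVar PConst PropVar),
    Form.proves (Pol.const c) (Form.proves (Pol.const c') B) ∈ CS →
    Form.proves (Pol.const c') B ∈ CS

/-- Provability in Σ_D(CS): axioms (A0)–(A9), modus ponens (R1), K-necessitation (R2),
the rule (R_D) and the rule (R_CS). -/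
inductive Proves {Ag PVar PConst PropVar : Type} [Inhabited PropVar]
    (CS : Set (Form Ag PVar PConst PropVar)) : Form Ag PVar PConst PropVar → Prop
  | ax {A} : Ax A → Proves CS A
  | mp {A B} : Proves CS (Form.imp A B) → Proves CS A → Proves CS B
  | nec {A} : Proves CS A → Proves CS (Form.know A)
  | rd {A : Form Ag PVar PConst PropVar} {ts ss : List (Pol PVar PConst)}
      (hne : ts ++ ss ≠ []) :
      Proves CS (Form.imp (Form.know A)
        (bigOr ((ts.map fun t => Form.neg (Form.box (Form.ann t))) ++
                (ss.map fun s => Form.box (Form.ann s))))) →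
      Proves CS (Form.imp (Form.know A)
        (bigOr ((ts.map fun t => Form.neg (Form.ann t)) ++
                (ss.map fun s => Form.ann s))))
  | rcs {B} : B ∈ CS → Proves CS B

/-- Γ is consistent in Σ_D(CS): no finite nonempty conjunction of members of Γ provably
implies falsum. -/
def CSConsistent {Ag PVar PConst PropVar : Type} [Inhabited PropVar]
    (CS Γ : Set (Form Ag PVar PConst PropVar)) : Prop :=
  ¬ ∃ (A : Form Ag PVar PConst PropVar) (L : List (Form Ag PVar PConst PropVar)),
      A ∈ Γ ∧ (∀ B ∈ L, B ∈ Γ) ∧ Proves CS (Form.imp (andList A L) Form.bot)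

/-- A jstit model for `Ag`: a jstit frame together with `Act`, an admissible evidence
function `E` and an evaluation `V`, subject to the semantical constraints. -/
structure JstitModel (Mo : Type) (Ag PVar PConst PropVar : Type)
    extends JstitFrame Mo Ag where
  act : Mo → Set Mo → Set (Pol PVar PConst)
  ev : Mo → Pol PVar PConst → Set (Form Ag PVar PConst PropVar)
  val : PropVar → Set (Mo × Set Mo)
  -- monotonicity of evidence
  ev_mono : ∀ m m' t, Re m m' → ev m t ⊆ ev m' t
  -- evidence closure properties
  ev_app : ∀ m s t A B, Form.imp A B ∈ ev m s → A ∈ ev m t → B ∈ ev m (Pol.times s t)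
  ev_sum_left : ∀ m s t, ev m s ⊆ ev m (Pol.plus s t)
  ev_sum_right : ∀ m s t, ev m t ⊆ ev m (Pol.plus s t)
  ev_bang : ∀ m t A, A ∈ ev m t → Form.proves t A ∈ ev m (Pol.bang t)
  -- expansion of presented proofs
  expansion : ∀ m m' h, toTemporalFrame.lt m' m → h ∈ toTemporalFrame.H m →
    act m' h ⊆ act m h
  -- no new proofs guaranteed
  no_new : ∀ m t, (∀ h ∈ toTemporalFrame.H m, t ∈ act m h) →
    ∃ m' h, toTemporalFrame.lt m' m ∧ h ∈ toTemporalFrame.H m ∧ t ∈ act m' h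
  -- presenting a new proof makes histories divide
  divide : ∀ m h h', h ∈ toTemporalFrame.H m → h' ∈ toTemporalFrame.H m →
    toTemporalFrame.Undiv m h h' → act m h = act m h'
  -- presented proofs are epistemically transparent
  transparent : ∀ m m' t, Re m m' → (∀ h ∈ toTemporalFrame.H m, t ∈ act m h) →
    ∀ h' ∈ toTemporalFrame.H m', t ∈ act m' h'

namespace JstitModel

variable {Mo Ag PVar PConst PropVar : Type}

/-- `Act_m`, the set of proofs presented at `m` under every history through `m`. -/
def ActM (M : JstitModel Mo Ag PVar PConst PropVar) (m : Mo) : Set (Pol PVar PConst) :=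
  { t | ∀ h ∈ M.toTemporalFrame.H m, t ∈ M.act m h }

/-- The satisfaction relation for jstit models. -/
def Sat (M : JstitModel Mo Ag PVar PConst PropVar) :
    Form Ag PVar PConst PropVar → Mo → Set Mo → Prop
  | Form.pv p, m, h => (m, h) ∈ M.val p
  | Form.and A B, m, h => M.Sat A m h ∧ M.Sat B m h
  | Form.neg A, m, h => ¬ M.Sat A m h
  | Form.stit j A, m, h => ∀ h' C, C ∈ M.choice m j → h ∈ C → h' ∈ C → M.Sat A m h'
  | Form.box A, m, _ => ∀ h' ∈ M.toTemporalFrame.H m, M.Sat A m h'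
  | Form.know A, m, _ => ∀ m' h', M.R m m' → h' ∈ M.toTemporalFrame.H m' → M.Sat A m' h'
  | Form.proves t A, m, _ => A ∈ M.ev m t ∧
      ∀ m' h', M.Re m m' → h' ∈ M.toTemporalFrame.H m' → M.Sat A m' h'
  | Form.ann t, m, h => t ∈ M.act m h

/-- Validity of a formula in a jstit model. -/
def Valid (M : JstitModel Mo Ag PVar PConst PropVar)
    (A : Form Ag PVar PConst PropVar) : Prop :=
  ∀ m h, h ∈ M.toTemporalFrame.H m → M.Sat A m h

end JstitModel

/-- CS-normality of a jstit model. -/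
def CSNormal {Mo Ag PVar PConst PropVar : Type}
    (CS : Set (Form Ag PVar PConst PropVar))
    (M : JstitModel Mo Ag PVar PConst PropVar) : Prop :=
  ∀ (c : PConst) (m : Mo) (A : Form Ag PVar PConst PropVar),
    Form.proves (Pol.const c) A ∈ CS → A ∈ M.ev m (Pol.const c)

/-! ### Auxiliary lemmas -/

namespace TemporalFrame

variable {Mo : Type} (T : TemporalFrame Mo)

theorem lt_of_lt_of_le' {a b c : Mo} (h1 : T.lt a b) (h2 : T.le b c) : T.lt a c := by
  refine ⟨T.le_trans h1.1 h2, fun he => h1.2 ?_⟩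
  subst he
  exact T.le_antisymm h1.1 h2

theorem lt_of_le_of_lt' {a b c : Mo} (h1 : T.le a b) (h2 : T.lt b c) : T.lt a c := by
  refine ⟨T.le_trans h1 h2.1, fun he => h2.2 ?_⟩
  subst he
  exact T.le_antisymm h2.1 h1

/-- Every moment lies on some history. -/
theorem exists_history (x : Mo) : ∃ h : Set Mo, T.IsHistory h ∧ x ∈ h := by
  have hc : IsChain T.le ({x} : Set Mo) := by
    intro a ha b hb hne
    rcases ha with rfl
    rcases hb with rfl
    exact absurd rfl hne
  obtain ⟨t, ht, hsub⟩ := hc.exists_maxChain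
  exact ⟨t, ⟨ht.1, fun h' hch hsub' => (ht.2 hch hsub').symm⟩, hsub rfl⟩

/-- Any two members of a history are comparable. -/
theorem hist_comp {h : Set Mo} (hh : T.IsHistory h) {a b : Mo} (ha : a ∈ h) (hb : b ∈ h) :
    T.le a b ∨ T.le b a := by
  rcases eq_or_ne a b with rfl | hne
  · exact Or.inl (T.le_refl a)
  · exact hh.1 ha hb hne

/-- Histories are downward closed. -/
theorem hist_down {h : Set Mo} (hh : T.IsHistory h) {y z : Mo} (hz : z ∈ h) (hyz : T.le y z) :
    y ∈ h := by
  have hc : IsChain T.le (insert y h) := by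
    intro a ha b hb hne
    have comp : ∀ w ∈ h, T.le y w ∨ T.le w y := by
      intro w hw
      rcases T.hist_comp hh hw hz with h1 | h1
      · exact T.no_backward z y w hyz h1
      · exact Or.inl (T.le_trans hyz h1)
    rcases ha with rfl | ha <;> rcases hb with rfl | hb
    · exact absurd rfl hne
    · exact comp b hb
    · exact (comp a ha).symm
    · exact T.hist_comp hh ha hb
  have := hh.2 _ hc (Set.subset_insert y h)
  rw [← this]
  exact Set.mem_insert y h

end TemporalFrame

namespace JstitModel

variable {Mo Ag PVar PConst PropVar : Type}
variable (M : JstitModel Mo Ag PVar PConst PropVar)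

theorem sat_imp {A B : Form Ag PVar PConst PropVar} {m : Mo} {h : Set Mo} :
    M.Sat (Form.imp A B) m h ↔ (M.Sat A m h → M.Sat B m h) := by
  simp only [Form.imp, JstitModel.Sat]
  tauto

theorem sat_or {A B : Form Ag PVar PConst PropVar} {m : Mo} {h : Set Mo} :
    M.Sat (Form.or A B) m h ↔ (M.Sat A m h ∨ M.Sat B m h) := by
  simp only [Form.or, JstitModel.Sat]
  tauto

theorem sat_bot [Inhabited PropVar] {m : Mo} {h : Set Mo} :
    ¬ M.Sat (Form.bot : Form Ag PVar PConst PropVar) m h := by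
  simp only [Form.bot, JstitModel.Sat]
  tauto

theorem sat_dia {A : Form Ag PVar PConst PropVar} {m : Mo} {h : Set Mo} :
    M.Sat (Form.dia A) m h ↔ ∃ g ∈ M.toTemporalFrame.H m, M.Sat A m g := by
  simp only [Form.dia, JstitModel.Sat]
  push_neg
  tauto

theorem sat_andList {A : Form Ag PVar PConst PropVar}
    {L : List (Form Ag PVar PConst PropVar)} {m : Mo} {h : Set Mo} :
    M.Sat (andList A L) m h ↔ (M.Sat A m h ∧ ∀ B ∈ L, M.Sat B m h) := by
  induction L generalizing A with
  | nil => simp [andList]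
  | cons B L ih =>
    simp only [andList, JstitModel.Sat, ih, List.mem_cons]
    constructor
    · rintro ⟨h1, h2, h3⟩
      exact ⟨h1, fun C hC => hC.elim (fun e => e ▸ h2) (h3 C)⟩
    · rintro ⟨h1, h2⟩
      exact ⟨h1, h2 B (Or.inl rfl), fun C hC => h2 C (Or.inr hC)⟩

theorem sat_bigOr [Inhabited PropVar] :
    ∀ (L : List (Form Ag PVar PConst PropVar)) (m : Mo) (h : Set Mo),
    M.Sat (bigOr L) m h ↔ ∃ B ∈ L, M.Sat B m h
  | [], m, h => by
      simp only [bigOr, List.not_mem_nil]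
      exact ⟨fun hb => absurd hb (M.sat_bot), by tauto⟩
  | [A], m, h => by simp [bigOr]
  | A :: B :: L, m, h => by
      have ih := sat_bigOr (B :: L) m h
      simp only [bigOr, sat_or, ih, List.mem_cons]
      constructor
      · rintro (h1 | ⟨C, hC, h2⟩)
        · exact ⟨A, Or.inl rfl, h1⟩
        · exact ⟨C, Or.inr hC, h2⟩
      · rintro ⟨C, (rfl | hC), h2⟩
        · exact Or.inl h2
        · exact Or.inr ⟨C, hC, h2⟩

end JstitModel

namespace JstitModel

variable {Mo Ag PVar PConst PropVar : Type}
variable (M : JstitModel Mo Ag PVar PConst PropVar)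

theorem ax_sound {A : Form Ag PVar PConst PropVar} (hA : Ax A) :
    ∀ m h, h ∈ M.toTemporalFrame.H m → M.Sat A m h := by
  induction hA with
  | @a0 A0 ht =>
    intro m h _
    classical
    set v : Form Ag PVar PConst PropVar → Bool :=
      fun B => if M.Sat B m h then true else false with hv
    have h1 : ∀ B C, v (Form.and B C) = (v B && v C) := by
      intro B C
      by_cases hB : M.Sat B m h <;> by_cases hC : M.Sat C m h <;>
        simp [hv, hB, hC, JstitModel.Sat]
    have h2 : ∀ B, v (Form.neg B) = !v B := by
      intro B
      by_cases hB : M.Sat B m h <;> simp [hv, hB, JstitModel.Sat]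
    have h3 := ht v h1 h2
    by_cases hA' : M.Sat A0 m h
    · exact hA'
    · simp [hv, hA'] at h3
  | @boxK A B =>
    intro m h hh
    rw [sat_imp]; intro h1; rw [sat_imp]; intro h2
    simp only [JstitModel.Sat] at h1 h2 ⊢
    intro h' hh'
    exact (M.sat_imp).1 (h1 h' hh') (h2 h' hh')
  | @boxT A =>
    intro m h hh
    rw [sat_imp]; intro h1
    simp only [JstitModel.Sat] at h1
    exact h1 h hh
  | @box4 A =>
    intro m h hh
    rw [sat_imp]; intro h1
    simp only [JstitModel.Sat] at h1 ⊢
    intro h' _ h'' hh''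
    exact h1 h'' hh''
  | @box5 A =>
    intro m h hh
    rw [sat_imp]; intro h1
    simp only [JstitModel.Sat] at h1 ⊢
    intro h' _ hcon
    exact h1 hcon
  | @stitK j A B =>
    intro m h hh
    rw [sat_imp]; intro h1; rw [sat_imp]; intro h2
    simp only [JstitModel.Sat] at h1 h2 ⊢
    intro h' C hC hhC hh'C
    exact (M.sat_imp).1 (h1 h' C hC hhC hh'C) (h2 h' C hC hhC hh'C)
  | @stitT j A =>
    intro m h hh
    rw [sat_imp]; intro h1
    simp only [JstitModel.Sat] at h1
    obtain ⟨C, hC, hhC⟩ := M.choice_cover m j h hh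
    exact h1 h C hC hhC hhC
  | @stit4 j A =>
    intro m h hh
    rw [sat_imp]; intro h1
    simp only [JstitModel.Sat] at h1 ⊢
    intro h' C hC hhC hh'C h'' C' hC' hh'C' hh''C'
    have hCC : C = C' := M.choice_disjoint m j C C' hC hC' ⟨h', hh'C, hh'C'⟩
    exact h1 h'' C hC hhC (by rw [hCC]; exact hh''C')
  | @stit5 j A =>
    intro m h hh
    rw [sat_imp]; intro h1
    simp only [JstitModel.Sat] at h1 ⊢
    intro h' C hC hhC hh'C hcon
    apply h1
    intro h'' C' hC' hhC' hh''C'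
    have hCC : C' = C := M.choice_disjoint m j C' C hC' hC ⟨h, hhC', hhC⟩
    exact hcon h'' C hC hh'C (by rw [← hCC]; exact hh''C')
  | @a2 j A =>
    intro m h hh
    rw [sat_imp]; intro h1
    simp only [JstitModel.Sat] at h1 ⊢
    intro h' C hC hhC hh'C
    exact h1 h' (M.choice_cell_sub m j C hC hh'C)
  | @a3 p L hnd =>
    intro m h hh
    rw [sat_imp]
    intro hprem
    classical
    have hall : ∀ q ∈ p :: L, ∃ g, g ∈ M.toTemporalFrame.H m ∧
        M.Sat (Form.stit q.1 q.2) m g := by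
      have h1 := (M.sat_andList).1 hprem
      intro q hq
      rcases List.mem_cons.1 hq with rfl | hq'
      · exact (M.sat_dia).1 h1.1
      · exact (M.sat_dia).1 (h1.2 _
          (List.mem_map_of_mem (f := fun q : Ag × Form Ag PVar PConst PropVar => Form.dia (Form.stit q.1 q.2)) hq'))
    have key : ∀ j : Ag, ∃ C, C ∈ M.choice m j ∧
        ∀ q ∈ p :: L, q.1 = j → ∃ g, g ∈ C ∧ M.Sat (Form.stit q.1 q.2) m g := by
      intro j
      by_cases hj : ∃ q ∈ p :: L, q.1 = j
      · obtain ⟨q, hq, hqj⟩ := hj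
        obtain ⟨g, hg, hsat⟩ := hall q hq
        obtain ⟨C, hC, hgC⟩ := M.choice_cover m j g hg
        refine ⟨C, hC, fun q' hq' hq'j => ⟨g, hgC, ?_⟩⟩
        have hqq : q' = q := List.inj_on_of_nodup_map hnd hq' hq (by rw [hq'j, hqj])
        rw [hqq]
        exact hsat
      · obtain ⟨C, hC, hhC⟩ := M.choice_cover m j h hh
        exact ⟨C, hC, fun q' hq' hq'j => absurd ⟨q', hq', hq'j⟩ hj⟩
    choose f hf1 hf2 using key
    obtain ⟨hstar, hstar_mem⟩ := M.independence m f hf1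
    have hstarf : ∀ j, hstar ∈ f j := fun j => Set.mem_iInter.1 hstar_mem j
    have hstarH : hstar ∈ M.toTemporalFrame.H m :=
      M.choice_cell_sub m p.1 (f p.1) (hf1 p.1) (hstarf p.1)
    rw [M.sat_dia]
    refine ⟨hstar, hstarH, ?_⟩
    have hsatq : ∀ q ∈ p :: L, M.Sat (Form.stit q.1 q.2) m hstar := by
      intro q hq
      obtain ⟨g, hgf, hsatg⟩ := hf2 q.1 q hq rfl
      simp only [JstitModel.Sat]
      intro h' C hC hsC hh'C
      have hCf : C = f q.1 :=
        M.choice_disjoint m q.1 C (f q.1) hC (hf1 q.1) ⟨hstar, hsC, hstarf q.1⟩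
      exact hsatg h' (f q.1) (hf1 q.1) hgf (by rw [← hCf]; exact hh'C)
    rw [M.sat_andList]
    refine ⟨hsatq p List.mem_cons_self, ?_⟩
    intro B hB
    obtain ⟨q, hq, rfl⟩ := List.mem_map.1 hB
    exact hsatq q (List.mem_cons_of_mem p hq)
  | @a4 s t A B =>
    intro m h hh
    rw [sat_imp]; intro h1; rw [sat_imp]; intro h2
    simp only [JstitModel.Sat] at h1 h2 ⊢
    obtain ⟨he1, hs1⟩ := h1
    obtain ⟨he2, hs2⟩ := h2
    refine ⟨M.ev_app m s t A B he1 he2, fun m' h' hRe hh' => ?_⟩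
    exact (M.sat_imp).1 (hs1 m' h' hRe hh') (hs2 m' h' hRe hh')
  | @a5 t A =>
    intro m h hh
    rw [sat_imp]; intro h1
    simp only [JstitModel.Sat] at h1 ⊢
    obtain ⟨he, hs⟩ := h1
    refine ⟨⟨M.ev_bang m t A he, ?_⟩, ?_⟩
    · intro m' h' hRe hh'
      exact ⟨M.ev_mono m m' t hRe he,
        fun m'' h'' hRe' hh'' => hs m'' h'' (M.Re_trans hRe hRe') hh''⟩
    · intro m' h' hR hh'
      exact hs m' h' (M.R_sub_Re hR) hh'
  | @a6 s t A =>
    intro m h hh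
    rw [sat_imp]; intro h1
    rcases (M.sat_or).1 h1 with h2 | h2 <;> simp only [JstitModel.Sat] at h2 ⊢
    · exact ⟨M.ev_sum_left m s t h2.1, h2.2⟩
    · exact ⟨M.ev_sum_right m s t h2.1, h2.2⟩
  | @knowK A B =>
    intro m h hh
    rw [sat_imp]; intro h1; rw [sat_imp]; intro h2
    simp only [JstitModel.Sat] at h1 h2 ⊢
    intro m' h' hR hh'
    exact (M.sat_imp).1 (h1 m' h' hR hh') (h2 m' h' hR hh')
  | @knowT A =>
    intro m h hh
    rw [sat_imp]; intro h1
    simp only [JstitModel.Sat] at h1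
    exact h1 m h (M.R_refl m) hh
  | @know4 A =>
    intro m h hh
    rw [sat_imp]; intro h1
    simp only [JstitModel.Sat] at h1 ⊢
    intro m' h' hR hh' m'' h'' hR' hh''
    exact h1 m'' h'' (M.R_trans hR hR') hh''
  | @a8 A =>
    intro m h hh
    rw [sat_imp]; intro h1
    simp only [JstitModel.Sat] at h1 ⊢
    intro h' hh' m' h'' hR hh'' h''' hh'''
    exact h1 m' h''' hR hh'''
  | @a9 t =>
    intro m h hh
    rw [sat_imp]; intro h1
    simp only [JstitModel.Sat] at h1 ⊢
    intro m' h' hR hh' h'' hh''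
    exact M.transparent m m' t (M.R_sub_Re hR) h1 h'' hh''

end JstitModel

namespace JstitModel

variable {Mo Ag PVar PConst PropVar : Type}
variable (M : JstitModel Mo Ag PVar PConst PropVar)

theorem act_up {x' x : Mo} {g : Set Mo} {q : Pol PVar PConst} (hle : M.le x' x)
    (hg : g ∈ M.toTemporalFrame.H x) (hq : q ∈ M.act x' g) : q ∈ M.act x g := by
  rcases eq_or_ne x' x with rfl | hne
  · exact hq
  · exact M.expansion x x' g ⟨hle, hne⟩ hg hq

theorem cs_sound [Inhabited PropVar] {CS : Set (Form Ag PVar PConst PropVar)}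
    (hCS : IsConstSpec CS) (hnorm : CSNormal CS M) :
    ∀ {B : Form Ag PVar PConst PropVar}, ConstIter B → B ∈ CS → M.Valid B := by
  intro B hCI
  induction hCI with
  | @base c A0 hAx =>
    intro hB m h hh
    exact ⟨hnorm c m A0 hB, fun m' h' _ hh' => M.ax_sound hAx m' h' hh'⟩
  | @step c B' hCI' ih =>
    intro hB m h hh
    have hB' : B' ∈ CS := by
      cases hCI' with
      | @base c' A1 _ => exact hCS.2 c c' _ hB
      | @step c' B'' _ => exact hCS.2 c c' _ hB
    exact ⟨hnorm c m B' hB, fun m' h' _ hh' => ih hB' m' h' hh'⟩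

theorem proves_sound [Inhabited PropVar] {CS : Set (Form Ag PVar PConst PropVar)}
    (hCS : IsConstSpec CS) (hnorm : CSNormal CS M)
    (hreg : M.toJstitFrame.Regular) {A : Form Ag PVar PConst PropVar}
    (hA : Proves CS A) : M.Valid A := by
  induction hA with
  | ax h => exact fun m h' hh => M.ax_sound h m h' hh
  | mp hAB hA' ihAB ihA =>
    intro m h hh
    exact (M.sat_imp).1 (ihAB m h hh) (ihA m h hh)
  | nec hA' ih =>
    intro m h hh
    simp only [JstitModel.Sat]
    intro m' h' hR hh'
    exact ih m' h' hh'
  | rcs hB => exact M.cs_sound hCS hnorm (hCS.1 _ hB) hB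
  | @rd A ts ss hne hprem ih =>
    intro m h hh
    rw [sat_imp]
    intro hKA
    simp only [JstitModel.Sat] at hKA
    rw [M.sat_bigOr]
    by_contra hcon
    push_neg at hcon
    have hTs : ∀ t ∈ ts, t ∈ M.act m h := by
      intro t ht
      have h1 := hcon (Form.neg (Form.ann t))
        (List.mem_append_left _ (List.mem_map_of_mem ht))
      simp only [JstitModel.Sat, not_not] at h1
      exact h1
    have hSs : ∀ s ∈ ss, s ∉ M.act m h := by
      intro s hs
      have h1 := hcon (Form.ann s) (List.mem_append_right _ (List.mem_map_of_mem hs))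
      simpa only [JstitModel.Sat] using h1
    have hD : ∀ x, M.R m x →
        (∃ t ∈ ts, ∃ g ∈ M.toTemporalFrame.H x, t ∉ M.act x g) ∨
        (∃ s ∈ ss, ∀ g ∈ M.toTemporalFrame.H x, s ∈ M.act x g) := by
      intro x hx
      obtain ⟨gx, hgx, hxgx⟩ := M.toTemporalFrame.exists_history x
      have hgxH : gx ∈ M.toTemporalFrame.H x := ⟨hgx, hxgx⟩
      have hsatP := ih x gx hgxH
      rw [sat_imp] at hsatP
      have hKx : M.Sat (Form.know A) x gx := by
        simp only [JstitModel.Sat]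
        intro m'' h'' hR hh''
        exact hKA m'' h'' (M.R_trans hx hR) hh''
      obtain ⟨B, hBmem, hBsat⟩ := (M.sat_bigOr _ x gx).1 (hsatP hKx)
      rcases List.mem_append.1 hBmem with hB | hB
      · obtain ⟨t, ht, rfl⟩ := List.mem_map.1 hB
        left
        refine ⟨t, ht, ?_⟩
        simp only [JstitModel.Sat] at hBsat
        push_neg at hBsat
        exact hBsat
      · obtain ⟨s, hs, rfl⟩ := List.mem_map.1 hB
        right
        refine ⟨s, hs, ?_⟩
        simp only [JstitModel.Sat] at hBsat
        exact hBsat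
    rcases hD m (M.R_refl m) with ⟨t0, ht0, g0, hg0H, hg0⟩ | ⟨s0, hs0, hs0A⟩
    swap
    · exact hSs s0 hs0 (hs0A h hh)
    by_cases hm1 : ∃ m1, m1 ∈ h ∧ M.toTemporalFrame.lt m m1
    · obtain ⟨m1, hm1h, hlt1⟩ := hm1
      have htAll : ∀ t ∈ ts, ∀ m0, M.toTemporalFrame.lt m m0 → M.le m0 m1 →
          ∀ g ∈ M.toTemporalFrame.H m0, t ∈ M.act m0 g := by
        intro t ht m0 hltm0 hle01 g hg
        have hmg : m ∈ g := M.toTemporalFrame.hist_down hg.1 hg.2 hltm0.1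
        have hdiv : M.act m g = M.act m h :=
          M.divide m g h ⟨hg.1, hmg⟩ hh
            ⟨m0, hltm0, hg.2, M.toTemporalFrame.hist_down hh.1 hm1h hle01⟩
        exact M.act_up hltm0.1 hg (by rw [hdiv]; exact hTs t ht)
      set S : Set Mo := {x | ∀ g ∈ M.toTemporalFrame.H x, t0 ∈ M.act x g} with hSdef
      have hmS : m ∉ S := fun hmem => hg0 (hmem g0 hg0H)
      have hS1 : ∀ m0, M.toTemporalFrame.lt m m0 → M.le m0 m1 → m0 ∈ S :=
        fun m0 h1 h2 => htAll t0 ht0 m0 h1 h2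
      have hS2 : ∀ x y, x ∈ S → M.Re x y → y ∈ S := by
        intro x y hx hRe g hg
        exact M.transparent x y t0 hRe hx g hg
      have hS3 : ∀ x, (∀ g ∈ M.toTemporalFrame.H x, ∃ m2 ∈ g,
          M.toTemporalFrame.Next x m2 ∧ m2 ∈ S) → x ∈ S := by
        intro x hx g hg
        obtain ⟨m2, hm2g, hnext, hm2S⟩ := hx g hg
        obtain ⟨x', g', hx'lt, hg'H, ht0'⟩ := M.no_new m2 t0 hm2S
        have hx'x : M.le x' x := hnext.2 x' hx'lt
        have hg'Hx : g' ∈ M.toTemporalFrame.H x :=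
          ⟨hg'H.1, M.toTemporalFrame.hist_down hg'H.1 hg'H.2 hnext.1.1⟩
        have h1 : t0 ∈ M.act x g' := M.act_up hx'x hg'Hx ht0'
        have hdiv : M.act x g' = M.act x g :=
          M.divide x g' g hg'Hx hg ⟨m2, hnext.1, hg'H.2, hm2g⟩
        rw [← hdiv]
        exact h1
      have hS4 : ∀ x, x ∈ S →
          (∀ x2, M.toTemporalFrame.lt x2 x →
            ∃ x3, M.toTemporalFrame.lt x2 x3 ∧ M.toTemporalFrame.lt x3 x) →
          ∃ m4, M.toTemporalFrame.lt m4 x ∧ m4 ∈ S := by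
        intro x hx hdense
        obtain ⟨x', g', hx'lt, hg'H, ht0'⟩ := M.no_new x t0 hx
        obtain ⟨m3, h1, h2⟩ := hdense x' hx'lt
        refine ⟨m3, h2, ?_⟩
        intro g'' hg''
        have hg'x' : g' ∈ M.toTemporalFrame.H x' :=
          ⟨hg'H.1, M.toTemporalFrame.hist_down hg'H.1 hg'H.2 hx'lt.1⟩
        have hg''x' : g'' ∈ M.toTemporalFrame.H x' :=
          ⟨hg''.1, M.toTemporalFrame.hist_down hg''.1 hg''.2 h1.1⟩
        have hm3g' : m3 ∈ g' := M.toTemporalFrame.hist_down hg'H.1 hg'H.2 h2.1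
        have hdiv : M.act x' g' = M.act x' g'' :=
          M.divide x' g' g'' hg'x' hg''x' ⟨m3, h1, hm3g', hg''.2⟩
        exact M.act_up h1.1 hg'' (by rw [← hdiv]; exact ht0')
      have hp1 : ∀ g1 ∈ M.toTemporalFrame.H m1, ¬ M.toTemporalFrame.Undiv m g0 g1 := by
        rintro g1 hg1 ⟨u, hu, hug0, hug1⟩
        have hmg1 : m ∈ g1 := M.toTemporalFrame.hist_down hg1.1 hg1.2 hlt1.1
        have hdiv1 : M.act m g1 = M.act m h :=
          M.divide m g1 h ⟨hg1.1, hmg1⟩ hh ⟨m1, hlt1, hg1.2, hm1h⟩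
        have hdiv0 : M.act m g0 = M.act m g1 :=
          M.divide m g0 g1 hg0H ⟨hg1.1, hmg1⟩ ⟨u, hu, hug0, hug1⟩
        apply hg0
        rw [hdiv0, hdiv1]
        exact hTs t0 ht0
      have hp2 : ∀ m' ∈ g0, M.toTemporalFrame.Next m m' → m' ∉ S := by
        intro m' hm'g0 hnext hm'S
        obtain ⟨x', g', hx'lt, hg'H, ht0'⟩ := M.no_new m' t0 hm'S
        have hx'm : M.le x' m := hnext.2 x' hx'lt
        have hg'Hm : g' ∈ M.toTemporalFrame.H m :=
          ⟨hg'H.1, M.toTemporalFrame.hist_down hg'H.1 hg'H.2 hnext.1.1⟩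
        have h1 : t0 ∈ M.act m g' := M.act_up hx'm hg'Hm ht0'
        have hdiv : M.act m g' = M.act m g0 :=
          M.divide m g' g0 hg'Hm hg0H ⟨m', hnext.1, hg'H.2, hm'g0⟩
        apply hg0
        rw [← hdiv]
        exact h1
      obtain ⟨m2, hle2, hnext2⟩ := hreg m m1 hlt1
        ⟨S, (fun m0 h1 h2 => ⟨hS1 m0 h1 h2, hS2, hS3, hS4⟩), hmS, g0, hg0H, hp1, hp2⟩
      have hm2h : m2 ∈ h := M.toTemporalFrame.hist_down hh.1 hm1h hle2
      rcases hD m2 (M.le_sub_R hnext2.1.1) with ⟨t, ht, g, hgH, htg⟩ | ⟨s, hs, hsA⟩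
      · exact htg (htAll t ht m2 hnext2.1 hle2 g hgH)
      · obtain ⟨x', g', hx'lt, hg'H, hsg'⟩ := M.no_new m2 s (fun g hg => hsA g hg)
        have hx'm : M.le x' m := hnext2.2 x' hx'lt
        have hg'Hm : g' ∈ M.toTemporalFrame.H m :=
          ⟨hg'H.1, M.toTemporalFrame.hist_down hg'H.1 hg'H.2 hnext2.1.1⟩
        have h1 : s ∈ M.act m g' := M.act_up hx'm hg'Hm hsg'
        have hdiv : M.act m g' = M.act m h :=
          M.divide m g' h hg'Hm hh ⟨m2, hnext2.1, hg'H.2, hm2h⟩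
        exact hSs s hs (by rw [← hdiv]; exact h1)
    · have hnolt : ∀ x, ¬ M.toTemporalFrame.lt m x := by
        intro x hx
        have hyb : ∀ y ∈ h, M.le y m := by
          intro y hy
          rcases M.toTemporalFrame.hist_comp hh.1 hy hh.2 with h1 | h1
          · exact h1
          · rcases eq_or_ne m y with rfl | hne
            · exact M.le_refl m
            · exact absurd ⟨y, hy, h1, hne⟩ hm1
        have hchain : IsChain M.le (insert x h) := by
          intro a ha b hb hne
          rcases ha with rfl | ha <;> rcases hb with rfl | hb
          · exact absurd rfl hne
          · exact Or.inr (M.le_trans (hyb b hb) hx.1)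
          · exact Or.inl (M.le_trans (hyb a ha) hx.1)
          · exact M.toTemporalFrame.hist_comp hh.1 ha hb
        have hxh : x ∈ h := by
          have he := hh.1.2 _ hchain (Set.subset_insert x h)
          rw [← he]
          exact Set.mem_insert x h
        exact hm1 ⟨x, hxh, hx⟩
      have hsub : ∀ y ∈ g0, M.le y m := by
        intro y hy
        rcases M.toTemporalFrame.hist_comp hg0H.1 hy hg0H.2 with h1 | h1
        · exact h1
        · rcases eq_or_ne m y with rfl | hne
          · exact M.le_refl m
          · exact absurd ⟨h1, hne⟩ (hnolt y)
      have hsubh : ∀ y ∈ h, M.le y m := by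
        intro y hy
        rcases M.toTemporalFrame.hist_comp hh.1 hy hh.2 with h1 | h1
        · exact h1
        · rcases eq_or_ne m y with rfl | hne
          · exact M.le_refl m
          · exact absurd ⟨h1, hne⟩ (hnolt y)
      have hchain : IsChain M.le (h ∪ g0) := by
        intro a ha b hb hne
        have ham : M.le a m := ha.elim (hsubh a) (hsub a)
        have hbm : M.le b m := hb.elim (hsubh b) (hsub b)
        exact M.no_backward m a b ham hbm
      have he1 : h ∪ g0 = h := hh.1.2 _ hchain Set.subset_union_left
      have he2 : h ∪ g0 = g0 := hg0H.1.2 _ hchain Set.subset_union_right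
      have heq : h = g0 := by rw [← he1, he2]
      exact hg0 (heq ▸ hTs t0 ht0)

end JstitModel

/-! ### The countermodel construction for non-regular frames -/

section Counter

variable {Mo Ag PVar PConst PropVar : Type}

/-- `g` passes through the bundle determined by `(m, m1]`. -/
def bundleW (F : JstitFrame Mo Ag) (m m1 : Mo) (g : Set Mo) : Prop :=
  ∃ y, F.toTemporalFrame.lt m y ∧ F.le y m1 ∧ y ∈ g

/-- `g` has an immediate successor of `x` lying in `S`. -/
def nxtW (F : JstitFrame Mo Ag) (S : Set Mo) (x : Mo) (g : Set Mo) : Prop :=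
  ∃ w ∈ g, F.toTemporalFrame.Next x w ∧ w ∈ S

theorem cond_mono {F : JstitFrame Mo Ag} {S : Set Mo} {m m1 : Mo}
    (hup : ∀ ⦃a b : Mo⦄, a ∈ S → F.le a b → b ∈ S)
    {P : Mo → Prop} {x' x : Mo} {g : Set Mo}
    (hP : P x' → P x) (hlt' : F.toTemporalFrame.lt x' x)
    (hg : F.toTemporalFrame.IsHistory g) (hxg : x ∈ g) :
    (P x' ∧ bundleW F m m1 g) ∨ x' ∈ S ∨ nxtW F S x' g →
    (P x ∧ bundleW F m m1 g) ∨ x ∈ S ∨ nxtW F S x g := by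
  rintro (⟨h1, h2⟩ | h | ⟨w, hwg, hnext, hwS⟩)
  · exact Or.inl ⟨hP h1, h2⟩
  · exact Or.inr (Or.inl (hup h hlt'.1))
  · rcases F.toTemporalFrame.hist_comp hg hwg hxg with hc | hc
    · exact Or.inr (Or.inl (hup hwS hc))
    · rcases eq_or_ne x w with rfl | hne
      · exact Or.inr (Or.inl hwS)
      · exfalso
        have h5 := hnext.2 x ⟨hc, hne⟩
        exact hlt'.2 (F.le_antisymm h5 hlt'.1).symm

theorem cond_div {F : JstitFrame Mo Ag} {S : Set Mo} {m m1 : Mo}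
    {P : Mo → Prop} {x u : Mo} {g g' : Set Mo}
    (hPle : P x → F.le m x)
    (hg : F.toTemporalFrame.IsHistory g) (hxg : x ∈ g)
    (hg' : F.toTemporalFrame.IsHistory g') (hxg' : x ∈ g')
    (hu : F.toTemporalFrame.lt x u) (hug : u ∈ g) (hug' : u ∈ g') :
    (P x ∧ bundleW F m m1 g) ∨ x ∈ S ∨ nxtW F S x g →
    (P x ∧ bundleW F m m1 g') ∨ x ∈ S ∨ nxtW F S x g' := by
  rintro (⟨h1, y, hy1, hy2, hyg⟩ | h | ⟨w, hwg, hnext, hwS⟩)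
  · refine Or.inl ⟨h1, ?_⟩
    rcases F.toTemporalFrame.hist_comp hg hyg hxg with hc | hc
    · exact ⟨y, hy1, hy2, F.toTemporalFrame.hist_down hg' hxg' hc⟩
    · rcases F.toTemporalFrame.hist_comp hg hyg hug with hc2 | hc2
      · exact ⟨y, hy1, hy2, F.toTemporalFrame.hist_down hg' hug' hc2⟩
      · exact ⟨u, F.toTemporalFrame.lt_of_le_of_lt' (hPle h1) hu,
          F.le_trans hc2 hy2, hug'⟩
  · exact Or.inr (Or.inl h)
  · refine Or.inr (Or.inr ⟨w, ?_, hnext, hwS⟩)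
    have hwu : F.le w u := by
      rcases F.toTemporalFrame.hist_comp hg hwg hug with hc | hc
      · exact hc
      · rcases eq_or_ne u w with rfl | hne
        · exact F.le_refl u
        · exfalso
          have h5 := hnext.2 u ⟨hc, hne⟩
          exact hu.2 (F.le_antisymm hu.1 h5)
    exact F.toTemporalFrame.hist_down hg' hug' hwu

theorem claimA {F : JstitFrame Mo Ag} {S : Set Mo} {m m1 : Mo} {h' : Set Mo}
    (hS1 : ∀ x, F.toTemporalFrame.lt m x → F.le x m1 → x ∈ S)
    (hup : ∀ ⦃a b : Mo⦄, a ∈ S → F.le a b → b ∈ S)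
    (h3 : ∀ x, (∀ g ∈ F.toTemporalFrame.H x,
      ∃ w ∈ g, F.toTemporalFrame.Next x w ∧ w ∈ S) → x ∈ S)
    (hmS : m ∉ S) (hh'H : h' ∈ F.toTemporalFrame.H m)
    (hBn' : ¬ bundleW F m m1 h')
    (hnx' : ∀ w ∈ h', F.toTemporalFrame.Next m w → w ∉ S)
    {x : Mo}
    (hx : ∀ g ∈ F.toTemporalFrame.H x,
      (F.le m x ∧ bundleW F m m1 g) ∨ x ∈ S ∨ nxtW F S x g) :
    x ∈ S := by
  by_cases hxS : x ∈ S
  · exact hxS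
  rcases eq_or_ne x m with rfl | hxm
  · exfalso
    rcases hx h' hh'H with ⟨_, hB⟩ | hs | ⟨w, hw, hnext, hwS⟩
    · exact hBn' hB
    · exact hmS hs
    · exact hnx' w hw hnext hwS
  · apply h3 x
    intro g hg
    rcases hx g hg with ⟨hmx, y, hy1, hy2, hyg⟩ | hs | hn
    · exfalso
      rcases F.toTemporalFrame.hist_comp hg.1 hyg hg.2 with hc | hc
      · exact hxS (hup (hS1 y hy1 hy2) hc)
      · exact hxS (hS1 x ⟨hmx, hxm.symm⟩ (F.le_trans hc hy2))
    · exact absurd hs hxS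
    · exact hn

/-- The countermodel over a non-regular frame. -/
def cmodel (F : JstitFrame Mo Ag) (S : Set Mo) (m m1 : Mo) (h' : Set Mo)
    (tP sP : Pol PVar PConst)
    (hlt : F.toTemporalFrame.lt m m1)
    (hS1 : ∀ x, F.toTemporalFrame.lt m x → F.le x m1 → x ∈ S)
    (hS2 : ∀ x y, x ∈ S → F.Re x y → y ∈ S)
    (h3 : ∀ x, (∀ g ∈ F.toTemporalFrame.H x,
      ∃ w ∈ g, F.toTemporalFrame.Next x w ∧ w ∈ S) → x ∈ S)
    (h4 : ∀ x, x ∈ S →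
      (∀ x2, F.toTemporalFrame.lt x2 x →
        ∃ x3, F.toTemporalFrame.lt x2 x3 ∧ F.toTemporalFrame.lt x3 x) →
      ∃ x4, F.toTemporalFrame.lt x4 x ∧ x4 ∈ S)
    (hmS : m ∉ S)
    (hh'H : h' ∈ F.toTemporalFrame.H m)
    (hBn' : ¬ bundleW F m m1 h')
    (hnx' : ∀ w ∈ h', F.toTemporalFrame.Next m w → w ∉ S) :
    JstitModel Mo Ag PVar PConst PropVar where
  toJstitFrame := F
  act := fun x g =>
    {q | (q = tP ∧ ((F.le m x ∧ bundleW F m m1 g) ∨ x ∈ S ∨ nxtW F S x g)) ∨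
         (q = sP ∧ ((F.toTemporalFrame.lt m x ∧ bundleW F m m1 g) ∨ x ∈ S ∨ nxtW F S x g))}
  ev := fun _ _ => Set.univ
  val := fun _ => ∅
  ev_mono := fun _ _ _ _ => Set.subset_univ _
  ev_app := fun _ _ _ _ _ _ _ => Set.mem_univ _
  ev_sum_left := fun _ _ _ => Set.subset_univ _
  ev_sum_right := fun _ _ _ => Set.subset_univ _
  ev_bang := fun _ _ _ _ => Set.mem_univ _
  expansion := by
    intro x x' g hlt' hg q hq
    have hup : ∀ ⦃a b : Mo⦄, a ∈ S → F.le a b → b ∈ S :=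
      fun a b ha hab => hS2 a b ha (F.R_sub_Re (F.le_sub_R hab))
    rcases hq with ⟨rfl, hc⟩ | ⟨rfl, hc⟩
    · exact Or.inl ⟨rfl, cond_mono hup (fun hp => F.le_trans hp hlt'.1) hlt' hg.1 hg.2 hc⟩
    · exact Or.inr ⟨rfl, cond_mono hup
        (fun hp => F.toTemporalFrame.lt_of_lt_of_le' hp hlt'.1) hlt' hg.1 hg.2 hc⟩
  no_new := by
    intro x q hAct
    have hup : ∀ ⦃a b : Mo⦄, a ∈ S → F.le a b → b ∈ S :=
      fun a b ha hab => hS2 a b ha (F.R_sub_Re (F.le_sub_R hab))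
    obtain ⟨g, hgh, hxg⟩ := F.toTemporalFrame.exists_history x
    have hgH : g ∈ F.toTemporalFrame.H x := ⟨hgh, hxg⟩
    have hxS : x ∈ S := by
      apply claimA hS1 hup h3 hmS hh'H hBn' hnx'
      intro g2 hg2
      rcases hAct g2 hg2 with ⟨_, hc⟩ | ⟨_, hc⟩
      · exact hc
      · rcases hc with ⟨h1, h2⟩ | hc | hc
        · exact Or.inl ⟨h1.1, h2⟩
        · exact Or.inr (Or.inl hc)
        · exact Or.inr (Or.inr hc)
    have hqor : q = tP ∨ q = sP := by
      rcases hAct g hgH with ⟨rfl, _⟩ | ⟨rfl, _⟩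
      · exact Or.inl rfl
      · exact Or.inr rfl
    by_cases hex : ∃ x'', F.toTemporalFrame.lt x'' x ∧ x'' ∈ S
    · obtain ⟨x'', h1, h2⟩ := hex
      refine ⟨x'', g, h1, hgH, ?_⟩
      rcases hqor with rfl | rfl
      · exact Or.inl ⟨rfl, Or.inr (Or.inl h2)⟩
      · exact Or.inr ⟨rfl, Or.inr (Or.inl h2)⟩
    · by_cases hdense : ∀ x2, F.toTemporalFrame.lt x2 x →
          ∃ x3, F.toTemporalFrame.lt x2 x3 ∧ F.toTemporalFrame.lt x3 x
      · obtain ⟨x4, h1, h2⟩ := h4 x hxS hdense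
        exact absurd ⟨x4, h1, h2⟩ hex
      · push_neg at hdense
        obtain ⟨x2, h1, h2⟩ := hdense
        have hnext : F.toTemporalFrame.Next x2 x := by
          refine ⟨h1, fun z hz => ?_⟩
          rcases F.no_backward x z x2 hz.1 h1.1 with hc | hc
          · exact hc
          · rcases eq_or_ne x2 z with rfl | hne
            · exact F.le_refl x2
            · exact absurd hz (h2 z ⟨hc, hne⟩)
        refine ⟨x2, g, h1, hgH, ?_⟩
        rcases hqor with rfl | rfl
        · exact Or.inl ⟨rfl, Or.inr (Or.inr ⟨x, hxg, hnext, hxS⟩)⟩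
        · exact Or.inr ⟨rfl, Or.inr (Or.inr ⟨x, hxg, hnext, hxS⟩)⟩
  divide := by
    intro x g g' hg hg' hundiv
    obtain ⟨u, hu, hug, hug'⟩ := hundiv
    have key : ∀ (g1 g2 : Set Mo), g1 ∈ F.toTemporalFrame.H x → g2 ∈ F.toTemporalFrame.H x →
        u ∈ g1 → u ∈ g2 → ∀ q : Pol PVar PConst,
        ((q = tP ∧ ((F.le m x ∧ bundleW F m m1 g1) ∨ x ∈ S ∨ nxtW F S x g1)) ∨
         (q = sP ∧ ((F.toTemporalFrame.lt m x ∧ bundleW F m m1 g1) ∨ x ∈ S ∨ nxtW F S x g1))) →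
        ((q = tP ∧ ((F.le m x ∧ bundleW F m m1 g2) ∨ x ∈ S ∨ nxtW F S x g2)) ∨
         (q = sP ∧ ((F.toTemporalFrame.lt m x ∧ bundleW F m m1 g2) ∨ x ∈ S ∨ nxtW F S x g2))) := by
      intro g1 g2 h1 h2 hu1 hu2 q hq
      rcases hq with ⟨rfl, hc⟩ | ⟨rfl, hc⟩
      · exact Or.inl ⟨rfl, cond_div (fun hp => hp) h1.1 h1.2 h2.1 h2.2 hu hu1 hu2 hc⟩
      · exact Or.inr ⟨rfl, cond_div (fun hp => hp.1) h1.1 h1.2 h2.1 h2.2 hu hu1 hu2 hc⟩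
    exact Set.ext fun q => ⟨key g g' hg hg' hug hug' q, key g' g hg' hg hug' hug q⟩
  transparent := by
    intro x x' q hRe hAct g' hg'
    have hup : ∀ ⦃a b : Mo⦄, a ∈ S → F.le a b → b ∈ S :=
      fun a b ha hab => hS2 a b ha (F.R_sub_Re (F.le_sub_R hab))
    have hxS : x ∈ S := by
      apply claimA hS1 hup h3 hmS hh'H hBn' hnx'
      intro g2 hg2
      rcases hAct g2 hg2 with ⟨_, hc⟩ | ⟨_, hc⟩
      · exact hc
      · rcases hc with ⟨h1, h2⟩ | hc | hc
        · exact Or.inl ⟨h1.1, h2⟩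
        · exact Or.inr (Or.inl hc)
        · exact Or.inr (Or.inr hc)
    have hx'S : x' ∈ S := hS2 x x' hxS hRe
    obtain ⟨g0, hg0, hxg0⟩ := F.toTemporalFrame.exists_history x
    rcases hAct g0 ⟨hg0, hxg0⟩ with ⟨rfl, _⟩ | ⟨rfl, _⟩
    · exact Or.inl ⟨rfl, Or.inr (Or.inl hx'S)⟩
    · exact Or.inr ⟨rfl, Or.inr (Or.inl hx'S)⟩

theorem taut_helper {Ag PVar PConst PropVar : Type} (K P Q : Form Ag PVar PConst PropVar) :
    Tautology (Form.imp (Form.imp K (Form.imp P Q))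
      (Form.imp K (Form.or (Form.neg P) Q))) := by
  intro v hand hneg
  simp only [Form.imp, Form.or, hand, hneg]
  cases v K <;> cases v P <;> cases v Q <;> rfl

end Counter
/-- Theorem 7: every CS-normal jstit model based on a jstit frame `F`
validates all theorems of Σ_D(CS) iff `F` is regular. -/
theorem stmt16 {Mo Ag PVar PConst PropVar : Type} [Finite Ag]
    [Countable PVar] [Infinite PVar] [Countable PConst] [Infinite PConst]
    [Countable PropVar] [Infinite PropVar] [Inhabited PropVar]
    (F : JstitFrame Mo Ag)
    (CS : Set (Form Ag PVar PConst PropVar)) (hCS : IsConstSpec CS) :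
    (∀ M : JstitModel Mo Ag PVar PConst PropVar,
        M.toJstitFrame = F → CSNormal CS M →
        ∀ A : Form Ag PVar PConst PropVar, Proves CS A → M.Valid A) ↔
      F.Regular := by
  constructor
  · -- validity of all theorems implies regularity
    intro hval m m1 hlt hhyp
    by_contra hno'
    push_neg at hno'
    have hno : ∀ m2, F.le m2 m1 → ¬ F.toTemporalFrame.Next m m2 := hno'
    obtain ⟨S, hSTheta, hmS, h', hh'H, hnd, hnxS⟩ := hhyp
    have hΘ := hSTheta m1 hlt (F.le_refl m1)
    have hS1 : ∀ x, F.toTemporalFrame.lt m x → F.le x m1 → x ∈ S :=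
      fun x h1 h2 => (hSTheta x h1 h2).1
    have hS2 : ∀ x y, x ∈ S → F.Re x y → y ∈ S := hΘ.2.1
    have h3 := hΘ.2.2.1
    have h4 := hΘ.2.2.2
    have hup : ∀ ⦃a b : Mo⦄, a ∈ S → F.le a b → b ∈ S :=
      fun a b ha hab => hS2 a b ha (F.R_sub_Re (F.le_sub_R hab))
    obtain ⟨h, hhist, hm1h⟩ := F.toTemporalFrame.exists_history m1
    have hmh : m ∈ h := F.toTemporalFrame.hist_down hhist hm1h hlt.1
    have hhH1 : h ∈ F.toTemporalFrame.H m1 := ⟨hhist, hm1h⟩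
    have hhHm : h ∈ F.toTemporalFrame.H m := ⟨hhist, hmh⟩
    have hBn' : ¬ bundleW F m m1 h' := by
      rintro ⟨y, hy1, hy2, hy3⟩
      exact hnd h hhH1 ⟨y, hy1, hy3, F.toTemporalFrame.hist_down hhist hm1h hy2⟩
    have hnx' : ∀ w ∈ h', F.toTemporalFrame.Next m w → w ∉ S :=
      fun w hw hn => hnxS w hw hn
    obtain ⟨a, b, hab⟩ := exists_pair_ne PVar
    have hts : (Pol.var b : Pol PVar PConst) ≠ Pol.var a := by
      intro e
      exact hab (Pol.var.inj e).symm
    set tP : Pol PVar PConst := Pol.var a with htP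
    set sP : Pol PVar PConst := Pol.var b with hsP
    set M : JstitModel Mo Ag PVar PConst PropVar :=
      cmodel F S m m1 h' tP sP hlt hS1 hS2 h3 h4 hmS hh'H hBn' hnx' with hM
    -- the refuted theorem of Σ_D(CS)
    set X : Form Ag PVar PConst PropVar :=
      Form.imp (Form.box (Form.ann tP)) (Form.box (Form.ann sP)) with hX
    have hprem : Proves CS (Form.imp (Form.know X)
        (Form.or (Form.neg (Form.box (Form.ann tP))) (Form.box (Form.ann sP)))) :=
      Proves.mp (Proves.ax (Ax.a0 (taut_helper _ _ _))) (Proves.ax Ax.knowT)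
    have hconc : Proves CS (Form.imp (Form.know X)
        (bigOr ((([tP].map fun t => Form.neg (Form.ann t)) ++
          ([sP].map fun s => Form.ann s))))) := by
      apply Proves.rd (ts := [tP]) (ss := [sP]) (by simp)
      exact hprem
    have hvalC := hval M rfl (fun c mm A0 _ => Set.mem_univ _) _ hconc
    have hsat := hvalC m h hhHm
    rw [JstitModel.sat_imp] at hsat
    have hknow : M.Sat (Form.know X) m h := by
      simp only [JstitModel.Sat]
      intro x g hR hg
      intro hcon
      apply hcon.2
      intro g' hg'
      have hxS : x ∈ S := by
        apply claimA hS1 hup h3 hmS hh'H hBn' hnx'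
        intro g2 hg2
        rcases hcon.1 g2 hg2 with ⟨_, hc⟩ | ⟨he, _⟩
        · exact hc
        · exact absurd he (Ne.symm hts)
      exact Or.inr ⟨rfl, Or.inr (Or.inl hxS)⟩
    obtain ⟨B, hBmem, hBsat⟩ := (JstitModel.sat_bigOr M _ m h).1 (hsat hknow)
    rcases List.mem_cons.1 hBmem with rfl | hB2
    · simp only [JstitModel.Sat] at hBsat
      apply hBsat
      exact Or.inl ⟨rfl, Or.inl ⟨F.le_refl m, ⟨m1, hlt, F.le_refl m1, hm1h⟩⟩⟩
    · rcases List.mem_cons.1 hB2 with rfl | hB3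
      · simp only [JstitModel.Sat] at hBsat
        rcases hBsat with ⟨he, _⟩ | ⟨_, hc⟩
        · exact hts he
        · rcases hc with ⟨hltmm, _⟩ | hmS' | ⟨w, hwh, hnext, hwS⟩
          · exact hltmm.2 rfl
          · exact hmS hmS'
          · rcases F.toTemporalFrame.hist_comp hhist hwh hm1h with hc2 | hc2
            · exact hno w hc2 hnext
            · rcases eq_or_ne m1 w with rfl | hne
              · exact hno m1 (F.le_refl m1) hnext
              · have h5 := hnext.2 m1 ⟨hc2, hne⟩
                exact hlt.2 (F.le_antisymm hlt.1 h5)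
      · exact absurd hB3 (by simp)
  · -- regularity implies soundness
    intro hreg M hMF hnorm A hA
    have hreg' : M.toJstitFrame.Regular := by rw [hMF]; exact hreg
    exact M.proves_sound hCS hnorm hreg' hA
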